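/- Cantor normal forms do not have limits of all strictly increasing sequences: there is a strictly increasing sequence of CNFs (namely ω, ω^ω, ω^ω^ω, …) that has no least upper bound in Cnf. -/
import Mathlib


/-- Unlabelled binary trees. -/
inductive T : Type
  | zero : T
  | node : T → T → T

/-- The hereditary lexicographical order on binary trees. -/
inductive tlt : T → T → Prop
  | z {a b : T} : tlt T.zero (T.node a b)
  | l {a b c d : T} : tlt a c → tlt (T.node a b) (T.node c d)
  | r {a b d : T} : tlt b d → tlt (T.node a b) (T.node a d)

/-- The reflexive closure of `tlt`. -/
def tle (s t : T) : Prop := tlt s t ∨ s = t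

/-- The left subtree, if it exists. -/
def left : T → T
  | T.zero => T.zero
  | T.node a _ => a

/-- The Cantor normal form predicate. -/
inductive isCNF : T → Prop
  | z : isCNF T.zero
  | n {s t : T} : isCNF s → isCNF t → tle (left t) s → isCNF (T.node s t)

/-- The sequence ω, ω^ω, ω^ω^ω, … of CNFs, where ω = ⟨⟨0,0⟩,0⟩ and ω^a = ⟨a,0⟩. -/
def wtower : ℕ → T
  | 0 => T.node (T.node T.zero T.zero) T.zero
  | k + 1 => T.node (wtower k) T.zero

theorem tlt_irrefl : ∀ t : T, ¬ tlt t t := by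
  intro t
  induction t with
  | zero => intro h; cases h
  | node a b iha ihb =>
    intro h
    cases h with
    | l h => exact iha h
    | r h => exact ihb h

theorem tlt_trans : ∀ {a b c : T}, tlt a b → tlt b c → tlt a c := by
  intro a b c h1
  induction h1 generalizing c with
  | z =>
    intro h2
    cases h2 with
    | l _ => exact tlt.z
    | r _ => exact tlt.z
  | l h ih =>
    intro h2
    cases h2 with
    | l h' => exact tlt.l (ih h')
    | r h' => exact tlt.l h
  | r h ih =>
    intro h2
    cases h2 with
    | l h' => exact tlt.l h'
    | r h' => exact tlt.r (ih h')

theorem tlt_node : ∀ (t s : T), tlt t (T.node t s) := by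
  intro t
  induction t with
  | zero => intro s; exact tlt.z
  | node a b iha ihb => intro s; exact tlt.l (iha b)

theorem cnf_cofinal : ∀ {b : T}, isCNF b → ∃ k, tlt b (wtower k) := by
  intro b hb
  induction hb with
  | z => exact ⟨0, tlt.z⟩
  | n hs ht _ ihs iht =>
    obtain ⟨k, hk⟩ := ihs
    exact ⟨k + 1, tlt.l hk⟩

/-- The sequence ω, ω^ω, … is a strictly increasing sequence of CNFs with no
least upper bound among CNFs: Cnf does not have limits. -/
theorem cnf_no_limits :
    (∀ i, isCNF (wtower i)) ∧
    (∀ i, tlt (wtower i) (wtower (i + 1))) ∧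
    ¬ ∃ x : T, isCNF x ∧
        (∀ i, tle (wtower i) x) ∧
        (∀ b : T, isCNF b → (∀ i, tle (wtower i) b) → tle x b) := by
  refine ⟨?_, ?_, ?_⟩
  · intro i
    induction i with
    | zero =>
      exact isCNF.n (isCNF.n isCNF.z isCNF.z (Or.inr rfl)) isCNF.z (Or.inl tlt.z)
    | succ k ih =>
      refine isCNF.n ih isCNF.z ?_
      show tle T.zero (wtower k)
      cases k with
      | zero => exact Or.inl tlt.z
      | succ m => exact Or.inl tlt.z
  · intro i
    exact tlt_node (wtower i) T.zero
  · rintro ⟨x, hx, hub, hlub⟩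
    obtain ⟨k, hk⟩ := cnf_cofinal hx
    cases hub k with
    | inl h => exact tlt_irrefl x (tlt_trans hk h)
    | inr h => exact tlt_irrefl x (h ▸ hk)
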